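/- Let u_n and v_n be the normalized Maclaurin coefficients of e^{ipz}·J_ν(z) and of e^{−ipz}·J_ν(z) respectively (i denotes the imaginary unit). Then the n-th normalized Maclaurin coefficient of cos(pz)·J_ν(z) equals (u_n + v_n)/2 for every n ≥ 0; moreover u_0 = 1, u_1 = ip, v_0 = 1, v_1 = −ip, and for every n ≥ 1: u_{n+1} = (ip(2ν+2n+1)/((n+1)(2ν+n+1)))·u_n + ((p²−1)/((n+1)(2ν+n+1)))·u_{n−1} and v_{n+1} = −(ip(2ν+2n+1)/((n+1)(2ν+n+1)))·v_n + ((p²−1)/((n+1)(2ν+n+1)))·v_{n−1}. -/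

import Mathlib

open Complex

/-- The entire part of the Bessel function of the first kind:
`J_ν(z) = (z/2)^ν * besselSeries ν z`. -/
noncomputable def besselSeries (ν : ℂ) (z : ℂ) : ℂ :=
  ∑' k : ℕ, (-1) ^ k * z ^ (2 * k) / (4 ^ k * (Nat.factorial k : ℂ) * Complex.Gamma (ν + (k : ℂ) + 1))

/-- The normalized `n`-th Maclaurin coefficient of `h(z) * J_ν(z)`:
`Γ(ν+1)` times the `n`-th Maclaurin coefficient of `z ↦ h z * besselSeries ν z`. -/
noncomputable def normCoeff (ν : ℂ) (h : ℂ → ℂ) (n : ℕ) : ℂ :=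
  Complex.Gamma (ν + 1) *
    (iteratedDeriv n (fun z => h z * besselSeries ν z) 0 / (Nat.factorial n : ℂ))

open Finset

set_option linter.unusedSectionVars false

noncomputable def sig (ν : ℂ) (k : ℕ) : ℂ :=
  (-1)^k / (4^k * (Nat.factorial k : ℂ) * Complex.Gamma (ν + (k:ℂ) + 1))

noncomputable def bb (ν : ℂ) (l : ℕ) : ℂ := if l % 2 = 0 then sig ν (l / 2) else 0


lemma conv_rec (ν c : ℂ) (d b : ℕ → ℂ)
    (hd : ∀ j : ℕ, ((j:ℂ)+1) * d (j+1) = c * d j)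
    (hb : ∀ l : ℕ, ((l:ℂ)+2) * (2*ν+(l:ℂ)+2) * b (l+2) = - b l)
    (hb1 : b 1 = 0) (n : ℕ) :
    ((n:ℂ)+2) * (2*ν+(n:ℂ)+2) * (∑ j ∈ range (n+3), d j * b (n+2-j)) =
      c * (2*ν+2*(n:ℂ)+3) * (∑ j ∈ range (n+2), d j * b (n+1-j))
      - (1+c^2) * (∑ j ∈ range (n+1), d j * b (n-j)) := by
  have hB : ∑ j ∈ range (n+3), (j:ℂ) * (d j * b (n+2-j))
      = c * ∑ j ∈ range (n+2), d j * b (n+1-j) := by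
    rw [Finset.sum_range_succ', Finset.mul_sum]
    simp only [Nat.cast_zero, zero_mul, add_zero]
    refine Finset.sum_congr rfl fun j hj => ?_
    have h2 := hd j
    push_cast
    linear_combination b (n+1-j) * h2
  have hC : ∑ j ∈ range (n+3), ((j:ℂ) * ((j:ℂ)-1)) * (d j * b (n+2-j))
      = c^2 * ∑ j ∈ range (n+1), d j * b (n-j) := by
    rw [Finset.sum_range_succ', Finset.sum_range_succ', Finset.mul_sum]
    norm_num
    refine Finset.sum_congr rfl fun j hj => ?_
    have h1 : n + 2 - (j+1+1) = n - j := by omega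
    have h2 := hd j
    have h3 := hd (j+1)
    push_cast at h3 ⊢
    linear_combination ((j:ℂ)+1) * b (n-j) * h3 + c * b (n-j) * h2
  have hD : ∑ j ∈ range (n+3), (((n:ℂ)+2-(j:ℂ)) * (2*ν+(n:ℂ)+2-(j:ℂ))) * (d j * b (n+2-j))
      = - ∑ j ∈ range (n+1), d j * b (n-j) := by
    have e2 : n + 2 - (n+1) = 1 := by omega
    have t2 : (((n:ℂ)+2-((n+2:ℕ):ℂ)) * (2*ν+(n:ℂ)+2-((n+2:ℕ):ℂ))) * (d (n+2) * b (n+2-(n+2))) = 0 := by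
      push_cast; ring
    have t1 : (((n:ℂ)+2-((n+1:ℕ):ℂ)) * (2*ν+(n:ℂ)+2-((n+1:ℕ):ℂ))) * (d (n+1) * b (n+2-(n+1))) = 0 := by
      rw [e2, hb1]; ring
    rw [Finset.sum_range_succ, Finset.sum_range_succ, t1, t2, add_zero, add_zero,
      ← Finset.sum_neg_distrib]
    refine Finset.sum_congr rfl fun j hj => ?_
    have hj' : j ≤ n := Nat.lt_succ_iff.mp (mem_range.mp hj)
    have h1 : n + 2 - j = (n-j)+2 := by omega
    have h2 := hb (n-j)
    rw [Nat.cast_sub hj'] at h2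
    rw [h1]
    linear_combination d j * h2
  calc ((n:ℂ)+2) * (2*ν+(n:ℂ)+2) * (∑ j ∈ range (n+3), d j * b (n+2-j))
      = ∑ j ∈ range (n+3), ((2*ν+2*(n:ℂ)+3) * ((j:ℂ) * (d j * b (n+2-j)))
          + (((n:ℂ)+2-(j:ℂ)) * (2*ν+(n:ℂ)+2-(j:ℂ))) * (d j * b (n+2-j))
          - ((j:ℂ) * ((j:ℂ)-1)) * (d j * b (n+2-j))) := by
        rw [Finset.mul_sum]
        exact Finset.sum_congr rfl fun j _ => by ring
    _ = (2*ν+2*(n:ℂ)+3) * (∑ j ∈ range (n+3), (j:ℂ) * (d j * b (n+2-j)))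
          + (∑ j ∈ range (n+3), (((n:ℂ)+2-(j:ℂ)) * (2*ν+(n:ℂ)+2-(j:ℂ))) * (d j * b (n+2-j)))
          - ∑ j ∈ range (n+3), ((j:ℂ) * ((j:ℂ)-1)) * (d j * b (n+2-j)) := by
        rw [Finset.sum_sub_distrib, Finset.sum_add_distrib, Finset.mul_sum]
    _ = _ := by rw [hB, hC, hD]; ring

section Aux
variable {ν : ℂ} (hν : ∀ n : ℕ, 2 * ν + (n : ℂ) + 1 ≠ 0)
include hν

lemma hnuk : ∀ k : ℕ, ν + (k:ℂ) + 1 ≠ 0 := by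
  intro k h
  apply hν (2*k+1)
  push_cast
  linear_combination 2*h

lemma hGamma : ∀ k : ℕ, Complex.Gamma (ν + (k:ℂ) + 1) ≠ 0 := by
  intro k
  apply Complex.Gamma_ne_zero
  intro m h
  apply hν (2*k+2*m+1)
  push_cast
  linear_combination 2*h

lemma sig_ne_zero (k : ℕ) : sig ν k ≠ 0 := by
  have h1 : ((4:ℂ)^k * (Nat.factorial k : ℂ) * Complex.Gamma (ν + (k:ℂ) + 1)) ≠ 0 := by
    refine mul_ne_zero (mul_ne_zero (pow_ne_zero _ (by norm_num)) ?_) (hGamma hν k)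
    exact_mod_cast Nat.cast_ne_zero.mpr (Nat.factorial_ne_zero k)
  exact div_ne_zero (pow_ne_zero _ (by norm_num)) h1

lemma sig_succ (k : ℕ) : (4*((k:ℂ)+1)*(ν+(k:ℂ)+1)) * sig ν (k+1) = - sig ν k := by
  have hg : Complex.Gamma (ν + ((k+1:ℕ):ℂ) + 1) = (ν+(k:ℂ)+1) * Complex.Gamma (ν + (k:ℂ) + 1) := by
    have : ν + ((k+1:ℕ):ℂ) + 1 = (ν + (k:ℂ) + 1) + 1 := by push_cast; ring
    rw [this, Complex.Gamma_add_one _ (hnuk hν k)]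
  have h2 : ((4:ℂ)^(k+1)) ≠ 0 := pow_ne_zero _ (by norm_num)
  have h3 : ((Nat.factorial (k+1) : ℕ):ℂ) ≠ 0 := Nat.cast_ne_zero.mpr (Nat.factorial_ne_zero (k+1))
  have h3' : ((Nat.factorial k : ℕ):ℂ) ≠ 0 := Nat.cast_ne_zero.mpr (Nat.factorial_ne_zero k)
  have h2' : ((4:ℂ)^k) ≠ 0 := pow_ne_zero _ (by norm_num)
  have h4 := hGamma hν k
  have h5 := hnuk hν k
  have hB : ((4:ℂ)^(k+1) * ((Nat.factorial (k+1) : ℕ):ℂ) * ((ν+(k:ℂ)+1) * Complex.Gamma (ν + (k:ℂ) + 1))) ≠ 0 :=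
    mul_ne_zero (mul_ne_zero h2 h3) (mul_ne_zero h5 h4)
  have hD : ((4:ℂ)^k * ((Nat.factorial k : ℕ):ℂ) * Complex.Gamma (ν + (k:ℂ) + 1)) ≠ 0 :=
    mul_ne_zero (mul_ne_zero h2' h3') h4
  unfold sig
  rw [hg, ← mul_div_assoc, ← neg_div, div_eq_div_iff hB hD]
  push_cast [pow_succ, Nat.factorial_succ]
  ring

lemma summable_sig_norm (z : ℂ) : Summable fun k => ‖sig ν k * z ^ (2*k)‖ := by
  rcases eq_or_ne z 0 with rfl | hz
  · apply summable_of_ne_finset_zero (f := fun k => ‖sig ν k * (0:ℂ) ^ (2*k)‖) (s := {0})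
    intro k hk
    have hk' : k ≠ 0 := by simpa using hk
    have : ((0:ℂ))^(2*k) = 0 := zero_pow (by omega)
    simp [this]
  · have hterm : ∀ k : ℕ, sig ν k * z ^ (2*k) ≠ 0 := fun k =>
      mul_ne_zero (sig_ne_zero hν k) (pow_ne_zero _ hz)
    apply summable_of_ratio_test_tendsto_lt_one (l := 0) one_pos
    · filter_upwards with k
      simpa using hterm k
    · -- ratio tends to 0
      have hnorm_eq : ∀ k : ℕ, ‖‖sig ν (k+1) * z ^ (2*(k+1))‖‖ / ‖‖sig ν k * z ^ (2*k)‖‖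
          = ‖z‖^2 / ‖4*((k:ℂ)+1)*(ν+(k:ℂ)+1)‖ := by
        intro k
        have h1 : ‖4*((k:ℂ)+1)*(ν+(k:ℂ)+1)‖ * ‖sig ν (k+1)‖ = ‖sig ν k‖ := by
          rw [← norm_mul, sig_succ hν k, norm_neg]
        have h2 : ‖4*((k:ℂ)+1)*(ν+(k:ℂ)+1)‖ ≠ 0 := by
          intro h
          rw [norm_eq_zero] at h
          have := sig_succ hν k
          rw [h, zero_mul] at this
          exact sig_ne_zero hν k (by rw [← neg_eq_zero, ← this])
        have h3 : ‖sig ν k * z^(2*k)‖ ≠ 0 := norm_ne_zero_iff.mpr (hterm k)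
        rw [norm_norm, norm_norm, div_eq_div_iff h3 h2]
        simp only [norm_mul, norm_pow] at h1 ⊢
        linear_combination (‖z‖^(2*k) * ‖z‖^2) * h1
      simp_rw [hnorm_eq]
      have htop : Filter.Tendsto (fun k : ℕ => ‖4*((k:ℂ)+1)*(ν+(k:ℂ)+1)‖) Filter.atTop Filter.atTop := by
        refine Filter.tendsto_atTop_mono' Filter.atTop ?_
          (Filter.tendsto_atTop_add_const_right Filter.atTop (1:ℝ) tendsto_natCast_atTop_atTop)
        filter_upwards [Filter.eventually_ge_atTop (Nat.ceil (‖ν‖+1))] with k hk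
        have hk' : ‖ν‖ + 1 ≤ (k:ℝ) := le_trans (Nat.le_ceil _) (by exact_mod_cast hk)
        have e4 : ‖((k:ℂ)+1)‖ = (k:ℝ)+1 := by
          have : ((k:ℂ)+1) = (((k:ℝ)+1 : ℝ) : ℂ) := by push_cast; ring
          rw [this, Complex.norm_real, Real.norm_eq_abs, _root_.abs_of_nonneg (by positivity)]
        have e1 : ‖4*((k:ℂ)+1)*(ν+(k:ℂ)+1)‖ = 4*((k:ℝ)+1)*‖ν+(k:ℂ)+1‖ := by
          rw [norm_mul, norm_mul, e4]
          norm_num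
        have e2 : (k:ℝ) + 1 - ‖ν‖ ≤ ‖ν+(k:ℂ)+1‖ := by
          have h' : ‖((k:ℂ)+1)‖ - ‖-ν‖ ≤ ‖((k:ℂ)+1) - (-ν)‖ := norm_sub_norm_le _ _
          have e3 : ((k:ℂ)+1) - (-ν) = ν+(k:ℂ)+1 := by ring
          rw [e3, e4, norm_neg] at h'
          exact h'
        rw [e1]
        nlinarith [norm_nonneg (ν+(k:ℂ)+1), norm_nonneg ν]
      have h6 := htop.inv_tendsto_atTop
      have h7 := h6.const_mul (‖z‖^2)
      rw [mul_zero] at h7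
      simp_rw [div_eq_mul_inv]
      exact h7


lemma two_mul_inj : Function.Injective (fun k : ℕ => 2*k) := fun a b h => by simp only at h; omega

lemma bb_comp (z : ℂ) (k : ℕ) : bb ν (2*k) * z^(2*k) = sig ν k * z^(2*k) := by
  have h1 : (2*k) % 2 = 0 := by omega
  have h2 : (2*k) / 2 = k := by omega
  simp [bb, h1, h2]

lemma bb_odd (z : ℂ) {l : ℕ} (hl : l ∉ Set.range (fun k : ℕ => 2*k)) : bb ν l * z^l = 0 := by
  have : l % 2 ≠ 0 := by
    intro h
    refine hl ⟨l/2, ?_⟩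
    show 2*(l/2) = l
    omega
  simp [bb, this]

lemma summable_bb_norm (z : ℂ) : Summable fun l => ‖bb ν l * z ^ l‖ := by
  rw [← Function.Injective.summable_iff (two_mul_inj hν) (fun l hl => by rw [bb_odd hν z hl, norm_zero])]
  have : (fun l => ‖bb ν l * z ^ l‖) ∘ (fun k : ℕ => 2*k) = fun k => ‖sig ν k * z^(2*k)‖ := by
    funext k
    simp only [Function.comp_apply]
    rw [bb_comp hν]
  rw [this]
  exact summable_sig_norm hν z

lemma hasSum_bb (z : ℂ) : HasSum (fun l => bb ν l * z ^ l) (besselSeries ν z) := by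
  have hS : Summable fun k => sig ν k * z ^ (2*k) := (summable_sig_norm hν z).of_norm
  have ht : besselSeries ν z = ∑' k, sig ν k * z^(2*k) := by
    refine tsum_congr fun k => ?_
    rw [sig]
    ring
  have h1 : HasSum (fun k => sig ν k * z ^ (2*k)) (besselSeries ν z) := by
    rw [ht]
    exact hS.hasSum
  rw [← Function.Injective.hasSum_iff (two_mul_inj hν) (fun l hl => bb_odd hν z hl)]
  have : (fun l => bb ν l * z ^ l) ∘ (fun k : ℕ => 2*k) = fun k => sig ν k * z^(2*k) := by
    funext k
    simp only [Function.comp_apply]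
    rw [bb_comp hν]
  rw [this]
  exact h1


lemma normCoeff_eq (d : ℕ → ℂ) (h : ℂ → ℂ)
    (hsum : ∀ z : ℂ, HasSum (fun k => d k * z^k) (h z))
    (hnorm : ∀ z : ℂ, Summable fun k => ‖d k * z^k‖) (n : ℕ) :
    normCoeff ν h n = Complex.Gamma (ν+1) * ∑ j ∈ range (n+1), d j * bb ν (n - j) := by
  set a : ℕ → ℂ := fun m => ∑ j ∈ range (m+1), d j * bb ν (m-j) with ha
  have hcoef : ∀ (y : ℂ) (m : ℕ), a m * y^m = ∑ j ∈ range (m+1), (d j * y^j) * (bb ν (m-j) * y^(m-j)) := by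
    intro y m
    rw [ha, Finset.sum_mul]
    refine Finset.sum_congr rfl fun j hj => ?_
    have hj' : j ≤ m := Nat.lt_succ_iff.mp (mem_range.mp hj)
    have : y^m = y^j * y^(m-j) := by
      rw [← pow_add]
      congr 1
      omega
    rw [this]
    ring
  have hrad : (FormalMultilinearSeries.ofScalars ℂ a).radius = ⊤ := by
    refine FormalMultilinearSeries.radius_eq_top_of_summable_norm _ fun r => ?_
    have hs := summable_norm_sum_mul_range_of_summable_norm (hnorm ((r:ℝ):ℂ)) (summable_bb_norm hν ((r:ℝ):ℂ))
    simp only [FormalMultilinearSeries.ofScalars_norm]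
    refine hs.congr fun m => ?_
    rw [← hcoef ((r:ℝ):ℂ) m, norm_mul, norm_pow, Complex.norm_real, Real.norm_eq_abs,
      _root_.abs_of_nonneg r.coe_nonneg]
  have key : HasFPowerSeriesOnBall (fun z => h z * besselSeries ν z)
      (FormalMultilinearSeries.ofScalars ℂ a) 0 ⊤ := by
    constructor
    · exact hrad.ge
    · exact ENNReal.zero_lt_top
    · intro y hy
      have hs := hasSum_sum_range_mul_of_summable_norm (hnorm y) (summable_bb_norm hν y)
      rw [(hsum y).tsum_eq, (hasSum_bb hν y).tsum_eq] at hs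
      simp only [zero_add]
      refine HasSum.congr_fun hs fun m => ?_
      rw [FormalMultilinearSeries.ofScalars_apply_eq, smul_eq_mul, ← hcoef y m]
  have hfact := key.factorial_smul (1:ℂ) n
  have happ : (FormalMultilinearSeries.ofScalars ℂ a n fun _ => (1:ℂ)) = a n := by
    rw [FormalMultilinearSeries.ofScalars_apply_eq]
    simp
  have hid : iteratedDeriv n (fun z => h z * besselSeries ν z) 0 = (n.factorial : ℂ) * a n := by
    rw [iteratedDeriv, ← hfact, happ, nsmul_eq_mul]
  have hf0 : (n.factorial : ℂ) ≠ 0 := Nat.cast_ne_zero.mpr n.factorial_ne_zero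
  rw [normCoeff, hid, mul_comm ((n.factorial : ℂ)) (a n), mul_div_assoc, div_self hf0, mul_one]

end Aux
noncomputable def dd (c : ℂ) (k : ℕ) : ℂ := c^k / (Nat.factorial k : ℂ)

lemma hasSum_exp_dd (c z : ℂ) : HasSum (fun k => dd c k * z^k) (Complex.exp (c*z)) := by
  have h := NormedSpace.exp_series_hasSum_exp' (𝕂 := ℂ) (c*z)
  rw [← Complex.exp_eq_exp_ℂ] at h
  refine HasSum.congr_fun h fun k => ?_
  rw [dd, smul_eq_mul, mul_pow]
  field_simp

lemma summable_exp_dd (c z : ℂ) : Summable fun k => ‖dd c k * z^k‖ := by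
  refine (Real.summable_pow_div_factorial ‖c*z‖).congr fun k => ?_
  rw [dd, norm_mul, norm_mul, norm_div, norm_pow, norm_pow, Complex.norm_natCast, mul_pow]
  ring

lemma hd_dd (c : ℂ) : ∀ j : ℕ, ((j:ℂ)+1) * dd c (j+1) = c * dd c j := by
  intro j
  have h1 : ((Nat.factorial j : ℕ):ℂ) ≠ 0 := Nat.cast_ne_zero.mpr (Nat.factorial_ne_zero j)
  have h2 : ((j:ℂ)+1) ≠ 0 := by
    intro h
    have : ((j+1 : ℕ):ℂ) = 0 := by push_cast; linear_combination h
    exact (Nat.cast_ne_zero.mpr (by omega)) this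
  rw [dd, dd, Nat.factorial_succ]
  push_cast
  field_simp
  ring

section Main
variable {ν : ℂ} (hν : ∀ n : ℕ, 2 * ν + (n : ℂ) + 1 ≠ 0)
include hν

lemma hb_bb : ∀ l : ℕ, ((l:ℂ)+2) * (2*ν+(l:ℂ)+2) * bb ν (l+2) = - bb ν l := by
  intro l
  rcases Nat.even_or_odd l with ⟨k, rfl⟩ | ⟨k, rfl⟩
  · have e0 : k + k = 2*k := by ring
    rw [e0]
    have h1 : (2*k) % 2 = 0 := by omega
    have h2 : (2*k+2) % 2 = 0 := by omega
    have h3 : (2*k) / 2 = k := by omega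
    have h4 : (2*k+2) / 2 = k+1 := by omega
    rw [bb, bb, if_pos h1, if_pos h2, h3, h4]
    have h5 := sig_succ hν k
    push_cast
    linear_combination h5
  · have h1 : (2*k+1) % 2 ≠ 0 := by omega
    have h2 : (2*k+1+2) % 2 ≠ 0 := by omega
    rw [bb, bb, if_neg h1, if_neg h2]
    ring

lemma bb_zero : bb ν 0 = 1 / Complex.Gamma (ν+1) := by
  have : (0:ℕ) % 2 = 0 := rfl
  rw [bb, if_pos this]
  simp [sig]

lemma bb_one : bb ν 1 = 0 := by
  rw [bb, if_neg (by omega)]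

lemma Gamma_nu_ne : Complex.Gamma (ν+1) ≠ 0 := by
  have := hGamma hν 0
  simpa using this

lemma u_rec (c : ℂ) (m : ℕ) :
    normCoeff ν (fun z => Complex.exp (c * z)) (m+2)
      = (c * (2 * ν + 2 * ((m:ℂ)+1) + 1) / ((((m:ℂ)+1) + 1) * (2 * ν + ((m:ℂ)+1) + 1))) *
          normCoeff ν (fun z => Complex.exp (c * z)) (m+1)
        + ((-(1+c^2)) / ((((m:ℂ)+1) + 1) * (2 * ν + ((m:ℂ)+1) + 1))) *
          normCoeff ν (fun z => Complex.exp (c * z)) m := by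
  have hn := fun n => normCoeff_eq hν (dd c) (fun z => Complex.exp (c * z))
    (fun z => hasSum_exp_dd c z) (fun z => summable_exp_dd c z) n
  rw [hn, hn, hn]
  have R := conv_rec ν c (dd c) (bb ν) (hd_dd c) (hb_bb hν) (bb_one hν) m
  have e1 : m+2+1 = m+3 := by omega
  have e2 : m+1+1 = m+2 := by omega
  rw [e1, e2]
  set A2 := ∑ j ∈ range (m+3), dd c j * bb ν (m+2-j) with hA2
  set A1 := ∑ j ∈ range (m+2), dd c j * bb ν (m+1-j) with hA1
  set A0 := ∑ j ∈ range (m+1), dd c j * bb ν (m-j) with hA0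
  have h1 : ((m:ℂ)+2) ≠ 0 := by
    intro h
    have : ((m+2 : ℕ):ℂ) = 0 := by push_cast; linear_combination h
    exact (Nat.cast_ne_zero.mpr (by omega)) this
  have h2 : (2*ν+(m:ℂ)+2) ≠ 0 := by
    intro h
    apply hν (m+1)
    push_cast
    linear_combination h
  have h1' : (((m:ℂ)+1) + 1) ≠ 0 := by
    intro h; apply h1; linear_combination h
  have h2' : (2*ν+((m:ℂ)+1)+1) ≠ 0 := by
    intro h; apply h2; linear_combination h
  have hD : ((((m:ℂ)+1) + 1) * (2*ν+((m:ℂ)+1)+1)) ≠ 0 := mul_ne_zero h1' h2'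
  rw [div_mul_eq_mul_div, div_mul_eq_mul_div, ← add_div, eq_div_iff hD]
  linear_combination Complex.Gamma (ν+1) * R
end Main
noncomputable def dc (p : ℂ) (k : ℕ) : ℂ := (dd (Complex.I*p) k + dd (-(Complex.I*p)) k)/2

lemma hasSum_cos_dc (p z : ℂ) : HasSum (fun k => dc p k * z^k) (Complex.cos (p*z)) := by
  have hcos : Complex.cos (p*z)
      = (Complex.exp ((Complex.I*p)*z) + Complex.exp ((-(Complex.I*p))*z))/2 := by
    have h2c := Complex.two_cos (p*z)
    have e1 : (p*z)*Complex.I = (Complex.I*p)*z := by ring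
    have e2 : -(p*z)*Complex.I = (-(Complex.I*p))*z := by ring
    rw [e1, e2] at h2c
    linear_combination h2c/2
  rw [hcos]
  have h := ((hasSum_exp_dd (Complex.I*p) z).add (hasSum_exp_dd (-(Complex.I*p)) z)).div_const 2
  refine HasSum.congr_fun h fun k => ?_
  rw [dc]
  ring

lemma summable_cos_dc (p z : ℂ) : Summable fun k => ‖dc p k * z^k‖ := by
  refine Summable.of_nonneg_of_le (fun k => norm_nonneg _) (fun k => ?_)
    ((summable_exp_dd (Complex.I*p) z).add (summable_exp_dd (-(Complex.I*p)) z))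
  have e : dc p k * z^k = (dd (Complex.I*p) k * z^k + dd (-(Complex.I*p)) k * z^k)/2 := by
    rw [dc]; ring
  rw [e, norm_div]
  have h2 : ‖(2:ℂ)‖ = 2 := by norm_num
  rw [h2]
  refine le_trans ?_ (norm_add_le _ _)
  have h0 : (0:ℝ) ≤ ‖dd (Complex.I*p) k * z^k + dd (-(Complex.I*p)) k * z^k‖ := norm_nonneg _
  linarith [div_le_self h0 (by norm_num : (1:ℝ) ≤ (2:ℝ))]

theorem cos_besselJ_coeff_recurrence (ν p : ℂ) (hν : ∀ n : ℕ, 2 * ν + (n : ℂ) + 1 ≠ 0)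
    (u : ℕ → ℂ) (hu : ∀ n, u n = normCoeff ν (fun z => Complex.exp (Complex.I * p * z)) n)
    (v : ℕ → ℂ) (hv : ∀ n, v n = normCoeff ν (fun z => Complex.exp (-(Complex.I * p) * z)) n)
    (w : ℕ → ℂ) (hw : ∀ n, w n = normCoeff ν (fun z => Complex.cos (p * z)) n) :
    (∀ n : ℕ, w n = (u n + v n) / 2) ∧ u 0 = 1 ∧ u 1 = Complex.I * p ∧ v 0 = 1 ∧ v 1 = -(Complex.I * p) ∧
    (∀ n : ℕ, 1 ≤ n →
      u (n + 1) = (Complex.I * p * (2 * ν + 2 * ((n : ℂ)) + 1) / ((((n : ℂ)) + 1) * (2 * ν + ((n : ℂ)) + 1))) * u n + ((p ^ 2 - 1) / ((((n : ℂ)) + 1) * (2 * ν + ((n : ℂ)) + 1))) * u (n - 1) ∧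
      v (n + 1) = (-(Complex.I * p * (2 * ν + 2 * ((n : ℂ)) + 1)) / ((((n : ℂ)) + 1) * (2 * ν + ((n : ℂ)) + 1))) * v n + ((p ^ 2 - 1) / ((((n : ℂ)) + 1) * (2 * ν + ((n : ℂ)) + 1))) * v (n - 1)) := by
  have hU : ∀ n, u n = Complex.Gamma (ν+1) * ∑ j ∈ range (n+1), dd (Complex.I*p) j * bb ν (n-j) :=
    fun n => by
      rw [hu n]
      exact normCoeff_eq hν (dd (Complex.I*p)) _
        (fun z => hasSum_exp_dd (Complex.I*p) z) (fun z => summable_exp_dd (Complex.I*p) z) n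
  have hV : ∀ n, v n = Complex.Gamma (ν+1) * ∑ j ∈ range (n+1), dd (-(Complex.I*p)) j * bb ν (n-j) :=
    fun n => by
      rw [hv n]
      exact normCoeff_eq hν (dd (-(Complex.I*p))) _
        (fun z => hasSum_exp_dd (-(Complex.I*p)) z) (fun z => summable_exp_dd (-(Complex.I*p)) z) n
  have hW : ∀ n, w n = Complex.Gamma (ν+1) * ∑ j ∈ range (n+1), dc p j * bb ν (n-j) :=
    fun n => by
      rw [hw n]
      exact normCoeff_eq hν (dc p) _
        (fun z => hasSum_cos_dc p z) (fun z => summable_cos_dc p z) n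
  have hGne := Gamma_nu_ne hν
  refine ⟨?_, ?_, ?_, ?_, ?_, ?_⟩
  · intro n
    rw [hW n, hU n, hV n]
    have hsplit : (2:ℂ) * ∑ j ∈ range (n+1), dc p j * bb ν (n-j)
        = (∑ j ∈ range (n+1), dd (Complex.I*p) j * bb ν (n-j))
          + ∑ j ∈ range (n+1), dd (-(Complex.I*p)) j * bb ν (n-j) := by
      rw [← Finset.sum_add_distrib, Finset.mul_sum]
      refine Finset.sum_congr rfl fun j _ => ?_
      rw [dc]
      ring
    linear_combination (Complex.Gamma (ν+1)/2) * hsplit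
  · rw [hU 0, Finset.sum_range_one, bb_zero hν, dd]
    norm_num
    field_simp
  · rw [hU 1, Finset.sum_range_succ, Finset.sum_range_one, bb_one hν, bb_zero hν, dd, dd]
    norm_num
    field_simp
  · rw [hV 0, Finset.sum_range_one, bb_zero hν, dd]
    norm_num
    field_simp
  · rw [hV 1, Finset.sum_range_succ, Finset.sum_range_one, bb_one hν, bb_zero hν, dd, dd]
    norm_num
    field_simp
  · intro n hn
    obtain ⟨m, rfl⟩ : ∃ m, n = m + 1 := ⟨n - 1, by omega⟩
    have hm1 : m + 1 - 1 = m := by omega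
    constructor
    · have hr := u_rec hν (Complex.I*p) m
      rw [← hu (m+2), ← hu (m+1), ← hu m] at hr
      have hc2 : (Complex.I*p)^2 = -(p^2) := by rw [mul_pow, Complex.I_sq]; ring
      rw [hm1]
      push_cast at hr ⊢
      rw [hr, hc2]
      ring
    · have hr := u_rec hν (-(Complex.I*p)) m
      rw [← hv (m+2), ← hv (m+1), ← hv m] at hr
      have hc2 : (-(Complex.I*p))^2 = -(p^2) := by rw [neg_pow, mul_pow, Complex.I_sq]; ring
      rw [hm1]
      push_cast at hr ⊢
      rw [hr, hc2]
      ring
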